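/- Let (r_n)_{n≥0} be a strictly increasing sequence of nonnegative integers with r_n ≤ (n+1)k − 1 for all n, for some fixed k ≥ 1, and let 𝔎: X^∞ → X^∞ be the restriction map (x_0, x_1, …) ↦ (x_{r_0}, x_{r_1}, …). Then for every probability measure μ on X^∞, H^sd(𝔎_*μ) ≤ k·H^sd(μ). -/

import Mathlib

open MeasureTheory Filter
open scoped NNReal ENNReal

/-- `phi x = x * log x` (with `phi 0 = 0` since `Real.log 0 = 0`). -/
noncomputable def phi (x : ℝ) : ℝ := x * Real.log x

/-- Shannon entropy of a finite indexed family of sets w.r.t. a measure. -/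
noncomputable def partEnt {Ω : Type*} [MeasurableSpace Ω] (μ : Measure Ω)
    {ι : Type*} [Fintype ι] (A : ι → Set Ω) : ℝ :=
  -∑ i, phi ((μ (A i)).toReal)

/-- A finite measurable partition, given as an indexed family. -/
structure IsPartition {Ω : Type*} [MeasurableSpace Ω] {ι : Type*} (A : ι → Set Ω) : Prop where
  meas : ∀ i, MeasurableSet (A i)
  disj : Pairwise (Function.onFun Disjoint A)
  cover : (⋃ i, A i) = Set.univ

/-- The length-`n` cylinder partition `𝒫̄^n` of `X^∞` built from the family `A`. -/
def cyl {X ι : Type*} (A : ι → Set X) (n : ℕ) (w : Fin n → ι) : Set (ℕ → X) :=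
  {x | ∀ i : Fin n, x i ∈ A (w i)}

/-- Stochastic dynamical entropy of `μ` relative to a partition of `X`. -/
noncomputable def HsdP {X : Type*} [MeasurableSpace X] (μ : Measure (ℕ → X))
    {ι : Type*} [Fintype ι] (A : ι → Set X) : EReal :=
  limsup (fun n : ℕ => ((partEnt μ (cyl A n) / n : ℝ) : EReal)) atTop

/-- Stochastic dynamical entropy of `μ`. -/
noncomputable def Hsd {X : Type*} [MeasurableSpace X] (μ : Measure (ℕ → X)) : EReal :=
  ⨆ (k : ℕ) (A : Fin k → Set X) (_ : IsPartition A), HsdP μ A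

/-- The dynamical join `∨_{i=0}^{n-1} T^{-i} 𝒜`. -/
def dynJoin {Ω ι : Type*} (T : Ω → Ω) (A : ι → Set Ω) (n : ℕ) (w : Fin n → ι) : Set Ω :=
  {x | ∀ i : Fin n, T^[i] x ∈ A (w i)}

/-- Kolmogorov–Sinai entropy of `T` w.r.t. `ν` and a partition. -/
noncomputable def ksEntP {Ω : Type*} [MeasurableSpace Ω] (T : Ω → Ω) (ν : Measure Ω)
    {ι : Type*} [Fintype ι] (A : ι → Set Ω) : EReal :=
  limsup (fun n : ℕ => ((partEnt ν (dynJoin T A n) / n : ℝ) : EReal)) atTop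

/-- Kolmogorov–Sinai entropy of `T` w.r.t. `ν`. -/
noncomputable def ksEnt {Ω : Type*} [MeasurableSpace Ω] (T : Ω → Ω) (ν : Measure Ω) : EReal :=
  ⨆ (k : ℕ) (A : Fin k → Set Ω) (_ : IsPartition A), ksEntP T ν A

/-- The shift on the path space `X^∞`. -/
def shift {X : Type*} : (ℕ → X) → (ℕ → X) := fun x n => x (n + 1)


section Aux

open MeasureTheory Filter

lemma sum_phi_le {α : Type*} (s : Finset α) (f : α → ℝ) (hf : ∀ a ∈ s, 0 ≤ f a) :
    ∑ a ∈ s, phi (f a) ≤ phi (∑ a ∈ s, f a) := by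
  calc ∑ a ∈ s, phi (f a) ≤ ∑ a ∈ s, f a * Real.log (∑ b ∈ s, f b) := by
        apply Finset.sum_le_sum
        intro a ha
        unfold phi
        rcases eq_or_lt_of_le (hf a ha) with h | h
        · simp [← h]
        · exact mul_le_mul_of_nonneg_left
            (Real.log_le_log h (Finset.single_le_sum hf ha)) (hf a ha)
    _ = phi (∑ b ∈ s, f b) := by rw [← Finset.sum_mul]; rfl

lemma negsum_phi_le {ι κ : Type*} [Fintype ι] [Fintype κ] [DecidableEq ι] (F : κ → ι)
    (p : ι → ℝ) (q : κ → ℝ) (hq : ∀ v, 0 ≤ q v)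
    (hpq : ∀ i, p i = ∑ v ∈ Finset.univ.filter (fun v => F v = i), q v) :
    (-∑ i, phi (p i)) ≤ -∑ v, phi (q v) := by
  rw [neg_le_neg_iff]
  calc ∑ v, phi (q v)
      = ∑ i, ∑ v ∈ Finset.univ.filter (fun v => F v = i), phi (q v) :=
        (Finset.sum_fiberwise _ _ _).symm
    _ ≤ ∑ i, phi (p i) := Finset.sum_le_sum fun i _ => by
        rw [hpq i]; exact sum_phi_le _ _ (fun v _ => hq v)

lemma measurableSet_cyl {X ι : Type*} [MeasurableSpace X] {A : ι → Set X}
    (hA : ∀ i, MeasurableSet (A i)) (n : ℕ) (w : Fin n → ι) : MeasurableSet (cyl A n w) := by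
  have : cyl A n w = ⋂ i : Fin n, (fun x : ℕ → X => x i) ⁻¹' A (w i) := by
    ext x; simp [cyl, Set.mem_iInter]
  rw [this]
  exact MeasurableSet.iInter fun i => (measurable_pi_apply (i : ℕ)) (hA (w i))

lemma cyl_disjoint {X ι : Type*} {A : ι → Set X} (hA : Pairwise (Function.onFun Disjoint A))
    (n : ℕ) : Pairwise (Function.onFun Disjoint (cyl A n)) := by
  intro w w' hww
  obtain ⟨i, hi⟩ := Function.ne_iff.mp hww
  exact Set.disjoint_left.mpr fun x hx hx' =>
    Set.disjoint_left.mp (hA hi) (hx i) (hx' i)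

lemma ereal_const_mul_limsup (c : ℝ) (hc : 0 < c) (u : ℕ → EReal) :
    ((c : EReal)) * Filter.limsup u Filter.atTop
      = Filter.limsup (fun n => (c : EReal) * u n) Filter.atTop := by
  have hmono : Monotone (fun x : EReal => (c : EReal) * x) := fun x y h =>
    mul_le_mul_of_nonneg_left h (by exact_mod_cast hc.le)
  have hcont : ContinuousAt (fun x : EReal => (c : EReal) * x)
      (Filter.limsup u Filter.atTop) := by
    have h0 : (c : EReal) ≠ 0 := by exact_mod_cast hc.ne'
    have hb : (c : EReal) ≠ ⊥ := by simp
    have ht : (c : EReal) ≠ ⊤ := by simp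
    have hm := EReal.continuousAt_mul
      (p := ((c : EReal), Filter.limsup u Filter.atTop))
      (Or.inl h0) (Or.inl h0) (Or.inl hb) (Or.inl ht)
    exact hm.comp ((continuous_const.prodMk continuous_id).continuousAt)
  exact hmono.map_limsup_of_continuousAt u hcont

end Aux

/-- for a restriction map along `(r_n)` with `r_n ≤ (n+1)k − 1`,
`H^sd(𝔎_*μ) ≤ k·H^sd(μ)`. -/
theorem hsd_restriction_le {X : Type*} [MeasurableSpace X]
    (μ : Measure (ℕ → X)) [IsProbabilityMeasure μ]
    (k : ℕ) (hk : 1 ≤ k) (r : ℕ → ℕ) (hr : StrictMono r)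
    (hrk : ∀ n, r n ≤ (n + 1) * k - 1) :
    Hsd (Measure.map (fun x : ℕ → X => x ∘ r) μ) ≤ ((k : ℝ) : EReal) * Hsd μ := by

  classical
  have hk0 : (0:ℝ) < (k:ℝ) := by exact_mod_cast Nat.lt_of_lt_of_le Nat.zero_lt_one hk
  have hknn : (0:EReal) ≤ ((k:ℝ):EReal) := by exact_mod_cast hk0.le
  have hmeas : Measurable (fun x : ℕ → X => x ∘ r) :=
    measurable_pi_lambda _ fun i => measurable_pi_apply (r i)
  set ν := Measure.map (fun x : ℕ → X => x ∘ r) μ with hν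
  rw [show Hsd ν = ⨆ (m : ℕ) (A : Fin m → Set X) (_ : IsPartition A), HsdP ν A from rfl]
  refine iSup_le fun m => iSup_le fun A => iSup_le fun hA => ?_
  have key : HsdP ν A ≤ ((k:ℝ):EReal) * HsdP μ A := by
    have step1 : ∀ n : ℕ, 1 ≤ n → partEnt ν (cyl A n) ≤ partEnt μ (cyl A (n*k)) := by
      intro n hn
      have hlt : ∀ i : Fin n, r i < n * k := by
        intro i
        have h1 : (i.1 + 1) * k ≤ n * k := Nat.mul_le_mul_right k i.2
        have h2 := hrk i.1
        have h3 : 1 * 1 ≤ n * k := Nat.mul_le_mul hn hk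
        omega
      set F : (Fin (n*k) → Fin m) → (Fin n → Fin m) := fun v i => v ⟨r i, hlt i⟩ with hF
      have hdecomp : ∀ w : Fin n → Fin m,
          (fun x : ℕ → X => x ∘ r) ⁻¹' (cyl A n w)
            = ⋃ v ∈ Finset.univ.filter (fun v => F v = w), cyl A (n*k) v := by
        intro w
        ext x
        simp only [Set.mem_preimage, Set.mem_iUnion, Finset.mem_filter, Finset.mem_univ,
          true_and, exists_prop]
        constructor
        · intro hx
          have hc : ∀ j : ℕ, ∃ i : Fin m, x j ∈ A i := by
            intro j
            have : x j ∈ ⋃ i, A i := hA.cover ▸ Set.mem_univ _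
            simpa using this
          choose c hcspec using hc
          refine ⟨fun j => c j.1, ?_, fun j => hcspec j.1⟩
          funext i
          by_contra hne
          exact Set.disjoint_left.mp (hA.disj hne) (hcspec (r i.1)) (hx i)
        · rintro ⟨v, hv, hxv⟩
          intro i
          have h := hxv ⟨r i.1, hlt i⟩
          have : v ⟨r i.1, hlt i⟩ = w i := congrFun hv i
          rwa [this] at h
      have hmap : ∀ w : Fin n → Fin m, (ν (cyl A n w)).toReal
          = ∑ v ∈ Finset.univ.filter (fun v => F v = w), (μ (cyl A (n*k) v)).toReal := by
        intro w
        rw [hν, Measure.map_apply hmeas (measurableSet_cyl hA.meas n w), hdecomp w,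
          measure_biUnion_finset ?_ (fun v _ => measurableSet_cyl hA.meas _ v),
          ENNReal.toReal_sum (fun v _ => measure_ne_top μ _)]
        intro v _ v' _ hne
        exact cyl_disjoint hA.disj (n*k) hne
      exact negsum_phi_le F _ _ (fun v => ENNReal.toReal_nonneg) hmap
    calc HsdP ν A
        ≤ limsup (fun n : ℕ =>
            (((k:ℝ) * (partEnt μ (cyl A (n*k)) / ((n*k : ℕ):ℝ)) : ℝ) : EReal)) atTop := by
          refine limsup_le_limsup ?_
          filter_upwards [eventually_ge_atTop 1] with n hn
          apply EReal.coe_le_coe_iff.mpr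
          have hn0 : (0:ℝ) < (n:ℝ) := by exact_mod_cast hn
          have e : (k:ℝ) * (partEnt μ (cyl A (n*k)) / ((n*k : ℕ):ℝ))
              = partEnt μ (cyl A (n*k)) / (n:ℝ) := by
            have hcast : ((n*k : ℕ):ℝ) = (n:ℝ)*(k:ℝ) := by push_cast; ring
            rw [hcast]
            field_simp
          rw [e]
          exact (div_le_div_iff_of_pos_right hn0).mpr (step1 n hn)
      _ = ((k:ℝ):EReal) * limsup (fun n : ℕ =>
            ((partEnt μ (cyl A (n*k)) / ((n*k : ℕ):ℝ) : ℝ) : EReal)) atTop := by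
          rw [ereal_const_mul_limsup (k:ℝ) hk0]
          simp only [EReal.coe_mul]
      _ ≤ ((k:ℝ):EReal) * HsdP μ A := by
          apply mul_le_mul_of_nonneg_left ?_ hknn
          have hg : Tendsto (fun n : ℕ => n * k) atTop atTop := by
            apply tendsto_atTop_mono (fun n => ?_) tendsto_id
            calc (n:ℕ) = n * 1 := (mul_one n).symm
              _ ≤ n * k := Nat.mul_le_mul le_rfl hk
          have heq : limsup (fun n : ℕ =>
              ((partEnt μ (cyl A (n*k)) / ((n*k : ℕ):ℝ) : ℝ) : EReal)) atTop
              = Filter.limsSup (Filter.map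
                  (fun n' : ℕ => ((partEnt μ (cyl A n') / (n':ℝ) : ℝ) : EReal))
                  (Filter.map (fun n : ℕ => n * k) atTop)) := by
            rw [Filter.map_map]
            rfl
          rw [heq, HsdP]
          exact limsSup_le_limsSup_of_le (Filter.map_mono hg)
  refine key.trans ?_
  apply mul_le_mul_of_nonneg_left ?_ hknn
  exact le_iSup_of_le m (le_iSup_of_le A (le_iSup_of_le hA le_rfl))
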